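/- If a class of languages L is closed under intersection with regular languages, concatenation with regular languages, and finite union, then for all m, k ≥ 1, L is closed under the iterated m-bounded right k-hairpin incompletion operation rHI*_{m,k}. -/

import Mathlib

open scoped Classical

namespace Hairpin

variable {V : Type}

/-- Reversed complement of a word under the involution `bar`. -/
def rc (bar : V → V) (w : List V) : List V := (w.map bar).reverse

/-- `w` admits a right hairpin decomposition `w = δγαβᾱ^R` with `|α| = k`, `|γ| ≤ m`. -/
def hasRightDecomp (bar : V → V) (m k : ℕ) (w : List V) : Prop :=
  ∃ δ γ α β : List V, w = δ ++ γ ++ α ++ β ++ rc bar α ∧ α.length = k ∧ γ.length ≤ m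

def hasLeftDecomp (bar : V → V) (m k : ℕ) (w : List V) : Prop :=
  ∃ α β γ δ : List V, w = α ++ β ++ rc bar α ++ γ ++ δ ∧ α.length = k ∧ γ.length ≤ m

/-- m-bounded right k-hairpin incompletion. -/
noncomputable def rHI (bar : V → V) (m k : ℕ) (w : List V) : Set (List V) :=
  if hasRightDecomp bar m k w then
    { v | ∃ δ γ α β : List V, w = δ ++ γ ++ α ++ β ++ rc bar α ∧ α.length = k ∧
          γ.length ≤ m ∧ v = w ++ rc bar γ }
  else {w}

/-- m-bounded left k-hairpin incompletion. -/
noncomputable def lHI (bar : V → V) (m k : ℕ) (w : List V) : Set (List V) :=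
  if hasLeftDecomp bar m k w then
    { v | ∃ α β γ δ : List V, w = α ++ β ++ rc bar α ++ γ ++ δ ∧ α.length = k ∧
          γ.length ≤ m ∧ v = rc bar γ ++ w }
  else {w}

/-- m-bounded k-hairpin incompletion. -/
noncomputable def HI (bar : V → V) (m k : ℕ) (w : List V) : Set (List V) :=
  rHI bar m k w ∪ lHI bar m k w

noncomputable def rHIn (bar : V → V) (m k : ℕ) (w : List V) : ℕ → Set (List V)
  | 0 => {w}
  | n + 1 => ⋃ v ∈ rHIn bar m k w n, rHI bar m k v

noncomputable def rHIstar (bar : V → V) (m k : ℕ) (w : List V) : Set (List V) :=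
  ⋃ n, rHIn bar m k w n

noncomputable def HIn (bar : V → V) (m k : ℕ) (w : List V) : ℕ → Set (List V)
  | 0 => {w}
  | n + 1 => ⋃ v ∈ HIn bar m k w n, HI bar m k v

noncomputable def HIstar (bar : V → V) (m k : ℕ) (w : List V) : Set (List V) :=
  ⋃ n, HIn bar m k w n

noncomputable def rHIstarL (bar : V → V) (m k : ℕ) (L : Set (List V)) : Set (List V) :=
  ⋃ w ∈ L, rHIstar bar m k w

noncomputable def HIL (bar : V → V) (m k : ℕ) (L : Set (List V)) : Set (List V) :=
  ⋃ w ∈ L, HI bar m k w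

noncomputable def HIstarL (bar : V → V) (m k : ℕ) (L : Set (List V)) : Set (List V) :=
  ⋃ w ∈ L, HIstar bar m k w

/-- The set `C_{m,k}(w)`. -/
def Cmk (bar : V → V) (m k : ℕ) (w : List V) : Set (List V × List V) :=
  { p | ∃ x y w₁ w₂ z : List V,
      x.length ≤ m ∧ y.length = k ∧ w = w₁ ++ (x ++ y) ++ w₂ ∧
      z.length ≤ k ∧ z <:+ w₂ ∧ z <+: rc bar y ∧ p = (x ++ y, z) }

/-- The suffix component of `D_{m,k}(w)`: all suffixes of `w` of length `i+k-1`, `0 ≤ i ≤ m`. -/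
def DmkSuf (m k : ℕ) (w : List V) : Set (List V) :=
  { s | ∃ i ≤ m, s.length = i + k - 1 ∧ s <:+ w }

noncomputable def Dmk (bar : V → V) (m k : ℕ) (w : List V) :
    Set (List V × List V) × Set (List V) :=
  (Cmk bar m k w, DmkSuf m k w)

/-- The set `C'_{m,k}(w)`. -/
def Cmk' (bar : V → V) (m k : ℕ) (w : List V) : Set (List V × List V) :=
  { p | ∃ x y w₁ w₂ z : List V,
      x.length ≤ m ∧ y.length = k ∧ w = w₁ ++ (y ++ x) ++ w₂ ∧
      z.length ≤ k ∧ z <+: w₁ ∧ z <:+ rc bar y ∧ p = (z, y ++ x) }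

/-- The prefix component of `D'_{m,k}(w)`. -/
def DmkPref (m k : ℕ) (w : List V) : Set (List V) :=
  { s | ∃ i ≤ m, s.length = i + k - 1 ∧ s <+: w }

noncomputable def Dmk' (bar : V → V) (m k : ℕ) (w : List V) :
    Set (List V × List V) × Set (List V) :=
  (Cmk' bar m k w, DmkPref m k w)

noncomputable def Emk (bar : V → V) (m k : ℕ) (w : List V) :=
  (Dmk bar m k w, Dmk' bar m k w)


/-- View a set of words as a `Language`. -/
def lang {V : Type} (L : Set (List V)) : Language V := L



/-! ### Auxiliary development -/

def lastN (n : ℕ) (l : List V) : List V := l.drop (l.length - n)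
lemma length_lastN (n : ℕ) (l : List V) : (lastN n l).length = l.length - (l.length - n) := by
  simp [lastN]
lemma lastN_of_le {n : ℕ} {l : List V} (h : l.length ≤ n) : lastN n l = l := by
  simp [lastN, Nat.sub_eq_zero_of_le h]
lemma take_append_lastN (n : ℕ) (l : List V) : l.take (l.length - n) ++ lastN n l = l :=
  List.take_append_drop _ _
lemma lastN_append_of_length_le {n : ℕ} (t z : List V) (h : n ≤ z.length) :
    lastN n (t ++ z) = lastN n z := by
  unfold lastN
  rw [List.length_append, show t.length + z.length - n = t.length + (z.length - n) by omega,
    ← List.drop_drop, List.drop_left]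
lemma lastN_eq_of_suffix {s v : List V} (p : List V) (h : v = p ++ s) : lastN s.length v = s := by
  subst h; unfold lastN
  rw [List.length_append, Nat.add_sub_cancel, List.drop_left]
lemma lastN_lastN {a b : ℕ} (h : a ≤ b) (l : List V) : lastN a (lastN b l) = lastN a l := by
  by_cases hl : l.length ≤ b
  · rw [lastN_of_le hl]
  · push_neg at hl
    conv_rhs => rw [← take_append_lastN b l]
    rw [lastN_append_of_length_le]
    have := length_lastN b l; omega
lemma lastN_append_eq (n : ℕ) (v u : List V) :
    lastN n (v ++ u) = lastN n (lastN n v ++ u) := by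
  by_cases hv : v.length ≤ n
  · rw [lastN_of_le hv]
  · push_neg at hv
    conv_lhs => rw [← take_append_lastN n v, List.append_assoc]
    rw [lastN_append_of_length_le]
    rw [List.length_append]
    have := length_lastN n v; omega
lemma rc_length (bar : V → V) (w : List V) : (rc bar w).length = w.length := by simp [rc]
lemma rc_rc {bar : V → V} (hbar : ∀ a, bar (bar a) = a) (w : List V) : rc bar (rc bar w) = w := by
  have : bar ∘ bar = id := funext hbar
  simp [rc, List.map_reverse, List.map_map, this]
lemma surg1 {v u p t q : List V} (h : v ++ u = p ++ t ++ q) (hle : u.length ≤ q.length) :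
    ∃ q₁, q = q₁ ++ u ∧ v = p ++ t ++ q₁ := by
  rcases List.append_eq_append_iff.mp h with ⟨a', h1, h2⟩ | ⟨c', h1, h2⟩
  · have : a'.length = 0 := by
      have := congrArg List.length h2; simp at this; omega
    have ha : a' = [] := List.eq_nil_of_length_eq_zero this
    subst ha
    simp at h2 h1
    exact ⟨[], by simp [h2], by simp [h1]⟩
  · exact ⟨c', h2, by rw [h1, List.append_assoc]⟩
lemma surg2 {p₀ s p Y : List V} (h : p₀ ++ s = p ++ Y) (hle : p₀.length ≤ p.length) :
    ∃ p₁, p = p₀ ++ p₁ ∧ s = p₁ ++ Y := by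
  rcases List.append_eq_append_iff.mp h with ⟨a', h1, h2⟩ | ⟨c', h1, h2⟩
  · exact ⟨a', h1, h2⟩
  · have : c'.length = 0 := by
      have := congrArg List.length h1; simp at this; omega
    have hc : c' = [] := List.eq_nil_of_length_eq_zero this
    subst hc; simp at h1 h2
    exact ⟨[], by simp [h1], by simp [h2]⟩

/-! state layer -/

def Fac (m k : ℕ) (v : List V) : Set (List V) :=
  {t | k ≤ t.length ∧ t.length ≤ m + k ∧ ∃ p q, v = p ++ t ++ q ∧ k ≤ q.length}

def NewFac (m k : ℕ) (s u : List V) : Set (List V) :=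
  {t | k ≤ t.length ∧ t.length ≤ m + k ∧
    ∃ p q, s ++ u = p ++ t ++ q ∧ k ≤ q.length ∧ q.length < u.length + k}

def st (m k : ℕ) (v : List V) : Set (List V) × List V := (Fac m k v, lastN (m + 2*k) v)

def stepQ (bar : V → V) (m k : ℕ) (q : Set (List V) × List V) : Set (List V) :=
  {u | ∃ γ, γ.length ≤ m ∧ k ≤ q.2.length ∧ γ ++ rc bar (lastN k q.2) ∈ q.1 ∧ u = rc bar γ}

def transQ (m k : ℕ) (q : Set (List V) × List V) (u : List V) : Set (List V) × List V :=
  (q.1 ∪ NewFac m k q.2 u, lastN (m + 2*k) (q.2 ++ u))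

def Step (bar : V → V) (m k : ℕ) (v : List V) : Set (List V) :=
  {u | ∃ δ γ α β, v = δ ++ γ ++ α ++ β ++ rc bar α ∧ α.length = k ∧ γ.length ≤ m ∧ u = rc bar γ}

lemma Fac_append (m k : ℕ) (v u : List V) :
    Fac m k (v ++ u) = Fac m k v ∪ NewFac m k (lastN (m+2*k) v) u := by
  ext t
  constructor
  · rintro ⟨h1, h2, p, q, heq, hq⟩
    by_cases hc : u.length + k ≤ q.length
    · left
      obtain ⟨q₁, hq₁, hv⟩ := surg1 heq (by omega)
      refine ⟨h1, h2, p, q₁, hv, ?_⟩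
      have := congrArg List.length hq₁; simp at this; omega
    · right
      push_neg at hc
      by_cases hvn : v.length ≤ m + 2*k
      · rw [lastN_of_le hvn]
        exact ⟨h1, h2, p, q, heq, hq, hc⟩
      · push_neg at hvn
        have hlen := congrArg List.length heq
        simp [List.length_append] at hlen
        have hkey : v.take (v.length - (m+2*k)) ++ (lastN (m+2*k) v ++ u) = p ++ (t ++ q) := by
          rw [← List.append_assoc, take_append_lastN, heq, List.append_assoc]
        have hplen : (v.take (v.length - (m+2*k))).length ≤ p.length := by
          simp only [List.length_take]
          omega
        obtain ⟨p₁, _, hs⟩ := surg2 hkey hplen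
        exact ⟨h1, h2, p₁, q, by rw [hs, List.append_assoc], hq, hc⟩
  · rintro (⟨h1, h2, p, q, heq, hq⟩ | ⟨h1, h2, p, q, heq, hq, _⟩)
    · refine ⟨h1, h2, p, q ++ u, by rw [heq]; simp [List.append_assoc], by rw [List.length_append]; omega⟩
    · refine ⟨h1, h2, v.take (v.length - (m+2*k)) ++ p, q, ?_, hq⟩
      conv_lhs => rw [← take_append_lastN (m+2*k) v, List.append_assoc, heq]
      simp [List.append_assoc]

lemma st_append (m k : ℕ) (v u : List V) : st m k (v ++ u) = transQ m k (st m k v) u := by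
  unfold st transQ
  exact Prod.ext (Fac_append m k v u) (lastN_append_eq _ v u)

lemma transQ_st_nil (m k : ℕ) (v : List V) : transQ m k (st m k v) [] = st m k v := by
  rw [← st_append, List.append_nil]

lemma Step_eq {bar : V → V} (hbar : ∀ a, bar (bar a) = a) (m k : ℕ) (v : List V) :
    Step bar m k v = stepQ bar m k (st m k v) := by
  have hlast2 : (st m k v).2 = lastN (m+2*k) v := rfl
  ext u; constructor
  · rintro ⟨δ, γ, α, β, heq, hα, hγ, rfl⟩
    have hsuf : lastN k v = rc bar α := by
      have hv2 : v = (δ ++ γ ++ α ++ β) ++ rc bar α := heq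
      have := lastN_eq_of_suffix _ hv2
      rwa [rc_length, hα] at this
    have hkv : k ≤ v.length := by
      have := congrArg List.length heq; simp [rc_length] at this; omega
    refine ⟨γ, hγ, ?_, ?_, rfl⟩
    · rw [hlast2]; have := length_lastN (m+2*k) v; omega
    · rw [hlast2, lastN_lastN (by omega), hsuf, rc_rc hbar]
      refine ⟨by rw [List.length_append, hα]; omega, by rw [List.length_append, hα]; omega, δ, β ++ rc bar α, by rw [heq]; simp [List.append_assoc], ?_⟩
      simp [rc_length, hα]
  · rintro ⟨γ, hγ, hks, hmem, rfl⟩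
    rw [hlast2] at hks hmem
    have hkv : k ≤ v.length := by have := length_lastN (m+2*k) v; omega
    rw [lastN_lastN (by omega : k ≤ m+2*k)] at hmem
    set α := rc bar (lastN k v) with hαdef
    obtain ⟨h1, h2, p, q, heq, hq⟩ := hmem
    have hq' : q = q.take (q.length - k) ++ lastN k q := (take_append_lastN _ _).symm
    have hlq : (lastN k q).length = k := by have := length_lastN k q; omega
    have hsufq : lastN k v = lastN k q := by
      have hv2 : v = (p ++ (γ ++ α) ++ q.take (q.length - k)) ++ lastN k q := by
        rw [heq]
        conv_lhs => rw [hq']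
        simp [List.append_assoc]
      have := lastN_eq_of_suffix _ hv2
      rw [hlq] at this
      exact this
    have hrcα : rc bar α = lastN k q := by rw [hαdef, rc_rc hbar, hsufq]
    refine ⟨p, γ, α, q.take (q.length - k), ?_, ?_, hγ, rfl⟩
    · rw [heq]
      conv_lhs => rw [hq']
      rw [hrcα]
      simp [List.append_assoc]
    · rw [hαdef, rc_length]
      have := length_lastN k v; omega


/-! bridge -/

inductive Reach (bar : V → V) (m k : ℕ) (w : List V) : List V → Prop
  | nil : Reach bar m k w []
  | snoc {x u} : Reach bar m k w x → u ∈ Step bar m k (w ++ x) → Reach bar m k w (x ++ u)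

inductive ExtQ (bar : V → V) (m k : ℕ) : Set (List V) × List V → List V → Prop
  | nil (q) : ExtQ bar m k q []
  | cons {q u x} : u ∈ stepQ bar m k q → ExtQ bar m k (transQ m k q u) x →
      ExtQ bar m k q (u ++ x)

lemma nil_mem_Step {bar : V → V} {m k : ℕ} {v : List V}
    (h : hasRightDecomp bar m k v) : [] ∈ Step bar m k v := by
  obtain ⟨δ, γ, α, β, heq, hα, hγ⟩ := h
  refine ⟨δ ++ γ, [], α, β, by rw [heq]; simp [List.append_assoc], hα, by simp, rfl⟩

lemma mem_rHI {bar : V → V} {m k : ℕ} {v x : List V} :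
    x ∈ rHI bar m k v ↔ (x = v ∨ ∃ u ∈ Step bar m k v, x = v ++ u) := by
  unfold rHI
  by_cases h : hasRightDecomp bar m k v
  · rw [if_pos h]
    constructor
    · rintro ⟨δ, γ, α, β, heq, hα, hγ, rfl⟩
      exact Or.inr ⟨rc bar γ, ⟨δ, γ, α, β, heq, hα, hγ, rfl⟩, rfl⟩
    · rintro (rfl | ⟨u, ⟨δ, γ, α, β, heq, hα, hγ, rfl⟩, rfl⟩)
      · obtain ⟨δ, γ, α, β, heq, hα, hγ⟩ := h
        exact ⟨δ ++ γ, [], α, β, by rw [heq]; simp [List.append_assoc], hα, by simp,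
          by simp [rc]⟩
      · exact ⟨δ, γ, α, β, heq, hα, hγ, rfl⟩
  · rw [if_neg h]
    simp only [Set.mem_singleton_iff]
    constructor
    · exact Or.inl
    · rintro (rfl | ⟨u, ⟨δ, γ, α, β, heq, hα, hγ, rfl⟩, rfl⟩)
      · rfl
      · exact absurd ⟨δ, γ, α, β, heq, hα, hγ⟩ h

lemma rHIstar_eq_reach (bar : V → V) (m k : ℕ) (w : List V) :
    rHIstar bar m k w = {v | ∃ x, Reach bar m k w x ∧ v = w ++ x} := by
  ext v
  constructor
  · rintro ⟨_, ⟨n, rfl⟩, hv⟩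
    induction n generalizing v with
    | zero =>
      simp only [rHIn, Set.mem_singleton_iff] at hv
      exact ⟨[], Reach.nil, by simp [hv]⟩
    | succ n ih =>
      simp only [rHIn, Set.mem_iUnion] at hv
      obtain ⟨v', hv', hvmem⟩ := hv
      obtain ⟨x, hx, rfl⟩ := ih v' hv'
      rcases mem_rHI.mp hvmem with rfl | ⟨u, hu, rfl⟩
      · exact ⟨x, hx, rfl⟩
      · exact ⟨x ++ u, Reach.snoc hx hu, by rw [List.append_assoc]⟩
  · rintro ⟨x, hx, rfl⟩
    induction hx with
    | nil => exact ⟨_, ⟨0, rfl⟩, by simp [rHIn]⟩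
    | @snoc x u hx hu ih =>
      obtain ⟨_, ⟨n, rfl⟩, hmem⟩ := ih
      refine ⟨_, ⟨n + 1, rfl⟩, ?_⟩
      simp only [rHIn, Set.mem_iUnion]
      refine ⟨w ++ x, hmem, mem_rHI.mpr (Or.inr ⟨u, hu, by rw [List.append_assoc]⟩)⟩

lemma extQ_snoc {bar : V → V} {m k : ℕ} {q : Set (List V) × List V} {x : List V}
    (h : ExtQ bar m k q x) :
    ∀ w, q = st m k w → ∀ u, u ∈ stepQ bar m k (st m k (w ++ x)) → ExtQ bar m k q (x ++ u) := by
  induction h with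
  | nil q =>
    rintro w rfl u hu
    rw [List.append_nil] at hu
    have := ExtQ.cons (bar := bar) hu (ExtQ.nil _)
    rwa [List.append_nil, ← List.nil_append u] at this
  | @cons q u₀ x₁ h1 h2 ih =>
    rintro w rfl u hu
    have hq' : transQ m k (st m k w) u₀ = st m k (w ++ u₀) := (st_append m k w u₀).symm
    have hu' : u ∈ stepQ bar m k (st m k ((w ++ u₀) ++ x₁)) := by
      rwa [List.append_assoc]
    have := ExtQ.cons h1 (ih (w ++ u₀) hq' u hu')
    rwa [← List.append_assoc] at this

lemma extQ_of_reach {bar : V → V} (hbar : ∀ a, bar (bar a) = a) {m k : ℕ} {w x : List V}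
    (h : Reach bar m k w x) : ExtQ bar m k (st m k w) x := by
  induction h with
  | nil => exact ExtQ.nil _
  | @snoc x u hx hu ih =>
    rw [Step_eq hbar] at hu
    exact extQ_snoc ih w rfl u hu

lemma reach_prepend {bar : V → V} {m k : ℕ} {w u x : List V}
    (hu : u ∈ Step bar m k w) (h : Reach bar m k (w ++ u) x) : Reach bar m k w (u ++ x) := by
  induction h with
  | nil =>
    have hu2 : u ∈ Step bar m k (w ++ []) := by rwa [List.append_nil]
    have := Reach.snoc (Reach.nil) hu2
    rwa [List.nil_append, ← List.append_nil u] at this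
  | @snoc x₁ u₁ h' hu₁ ih =>
    have : u₁ ∈ Step bar m k (w ++ (u ++ x₁)) := by rwa [← List.append_assoc]
    have := Reach.snoc ih this
    rwa [List.append_assoc] at this

lemma reach_of_extQ {bar : V → V} (hbar : ∀ a, bar (bar a) = a) {m k : ℕ}
    {q : Set (List V) × List V} {x : List V} (h : ExtQ bar m k q x) :
    ∀ w, q = st m k w → Reach bar m k w x := by
  induction h with
  | nil q => intro w _; exact Reach.nil
  | @cons q u₀ x₁ h1 h2 ih =>
    rintro w rfl
    have h1' : u₀ ∈ Step bar m k w := by rwa [Step_eq hbar]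
    exact reach_prepend h1' (ih (w ++ u₀) (st_append m k w u₀).symm)


/-! finiteness and automata -/

lemma finite_range_st (m k : ℕ) [Fintype V] : (Set.range (st (V := V) m k)).Finite := by
  have hT1 : ({l : List V | l.length ≤ m + k}).Finite := List.finite_length_le V (m+k)
  have hT2 : ({l : List V | l.length ≤ m + 2*k}).Finite := List.finite_length_le V (m+2*k)
  refine (Set.Finite.prod hT1.finite_subsets hT2).subset ?_
  rintro _ ⟨v, rfl⟩
  refine ⟨?_, ?_⟩
  · intro t ht; exact ht.2.1
  · have := length_lastN (m+2*k) v
    simp only [st, Set.mem_setOf_eq]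
    omega

lemma extQ_cons_aux {bar : V → V} {m k : ℕ} {q : Set (List V) × List V} {y : List V}
    (h : ExtQ bar m k q y) :
    ∀ w, q = st m k w → ∀ a x, y = a :: x →
      ∃ rest z, (a :: rest) ∈ stepQ bar m k q ∧ x = rest ++ z ∧
        ExtQ bar m k (transQ m k q (a :: rest)) z := by
  induction h with
  | nil q => intro w hw a x hx; exact absurd hx (by simp)
  | @cons q u x₁ h1 h2 ih =>
    rintro w rfl a x hx
    cases u with
    | nil =>
      rw [List.nil_append] at hx
      have ht := transQ_st_nil m k w
      obtain ⟨rest, z, hr1, hr2, hr3⟩ := ih w ht a x hx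
      rw [ht] at hr1 hr3
      exact ⟨rest, z, hr1, hr2, hr3⟩
    | cons b rest =>
      rw [List.cons_append] at hx
      obtain ⟨rfl, hx2⟩ : b = a ∧ rest ++ x₁ = x := by
        constructor <;> injection hx
      exact ⟨rest, x₁, h1, hx2.symm, h2⟩

lemma stepQ_length_le {bar : V → V} {m k : ℕ} {q : Set (List V) × List V} {u : List V}
    (h : u ∈ stepQ bar m k q) : u.length ≤ m := by
  obtain ⟨γ, hγ, _, _, rfl⟩ := h
  rw [rc_length]; exact hγ

lemma isRegular_extLang (bar : V → V) (m k : ℕ) [Fintype V] (w₀ : List V) :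
    Language.IsRegular ({x | ExtQ bar m k (st m k w₀) x} : Language V) := by
  classical
  haveI : Fintype ↥(Set.range (st (V := V) m k)) := (finite_range_st m k).fintype
  haveI : Fintype ↥{l : List V | l.length ≤ m} := (List.finite_length_le V m).fintype
  set St := ↥(Set.range (st (V := V) m k)) × ↥{l : List V | l.length ≤ m} with hSt
  let M : NFA V St :=
    { step := fun p a =>
        {p' | (p.2.val = [] ∧ ∃ rest, (a :: rest) ∈ stepQ bar m k p.1.val ∧
                p'.1.val = transQ m k p.1.val (a :: rest) ∧ p'.2.val = rest) ∨
              (∃ b₀, p.2.val = a :: b₀ ∧ p'.1 = p.1 ∧ p'.2.val = b₀)}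
      start := {p | p.1.val = st m k w₀ ∧ p.2.val = []}
      accept := {p | p.2.val = []} }
  let Lst : St → Set (List V) := fun p => {x | ∃ z, x = p.2.val ++ z ∧ ExtQ bar m k p.1.val z}
  have K1 : ∀ p : St, [] ∈ Lst p ↔ p ∈ M.accept := by
    intro p
    constructor
    · rintro ⟨z, hz, _⟩
      exact (List.append_eq_nil_iff.mp hz.symm).1
    · intro hp
      exact ⟨[], by rw [List.append_nil]; exact hp.symm, ExtQ.nil _⟩
  have K2 : ∀ (p : St) (a : V) (x : List V),
      (a :: x) ∈ Lst p ↔ ∃ p' ∈ M.step p a, x ∈ Lst p' := by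
    rintro ⟨⟨qv, hq⟩, b⟩ a x
    have hq' := hq
    obtain ⟨w, hw⟩ := hq'
    subst hw
    rcases hb : b.val with _ | ⟨c, b₀⟩
    · -- buffer empty
      constructor
      · rintro ⟨z, hz, hext⟩
        rw [hb, List.nil_append] at hz
        subst hz
        obtain ⟨rest, z, h1, h2, h3⟩ := extQ_cons_aux hext w rfl a x rfl
        have hrest : rest.length ≤ m := by
          have := stepQ_length_le h1; simp at this; omega
        refine ⟨(⟨transQ m k (st m k w) (a :: rest), by
            rw [← st_append]; exact Set.mem_range_self _⟩, ⟨rest, hrest⟩), ?_, ?_⟩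
        · exact Or.inl ⟨hb, rest, h1, rfl, rfl⟩
        · exact ⟨z, h2, h3⟩
      · rintro ⟨p', hstep, z, hz, hext⟩
        rcases hstep with ⟨_, rest, h1, h2, h3⟩ | ⟨b₀, hb₀, _, _⟩
        · refine ⟨a :: x, by rw [hb, List.nil_append], ?_⟩
          rw [h3] at hz
          subst hz
          rw [h2] at hext
          exact ExtQ.cons h1 hext
        · rw [hb] at hb₀; exact absurd hb₀ (by simp)
    · -- buffer c :: b₀
      constructor
      · rintro ⟨z, hz, hext⟩
        rw [hb, List.cons_append] at hz
        obtain ⟨rfl, hx⟩ : a = c ∧ x = b₀ ++ z := by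
          constructor <;> injection hz
        have hb₀ : b₀.length ≤ m := by
          have := b.property
          simp only [Set.mem_setOf_eq, hb, List.length_cons] at this ⊢
          omega
        exact ⟨(⟨st m k w, hq⟩, ⟨b₀, hb₀⟩), Or.inr ⟨b₀, hb, rfl, rfl⟩, z, hx, hext⟩
      · rintro ⟨p', hstep, z, hz, hext⟩
        rcases hstep with ⟨hnil, _⟩ | ⟨b₀', hb₀, hp1, hp2⟩
        · rw [hb] at hnil; exact absurd hnil (by simp)
        · rw [hb] at hb₀
          obtain ⟨rfl, hbb⟩ : c = a ∧ b₀ = b₀' := by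
            constructor <;> injection hb₀
          rw [hp2, ← hbb] at hz
          rw [hp1] at hext
          exact ⟨z, by rw [hb, hz, List.cons_append], hext⟩
  have K3 : ∀ (x : List V) (S : Set St),
      (∃ p ∈ M.accept, p ∈ M.evalFrom S x) ↔ ∃ p ∈ S, x ∈ Lst p := by
    intro x
    induction x with
    | nil =>
      intro S
      simp only [NFA.evalFrom_nil]
      constructor
      · rintro ⟨p, hacc, hS⟩; exact ⟨p, hS, (K1 p).mpr hacc⟩
      · rintro ⟨p, hS, hL⟩; exact ⟨p, (K1 p).mp hL, hS⟩
    | cons a x ih =>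
      intro S
      have : M.evalFrom S (a :: x) = M.evalFrom (M.stepSet S a) x := rfl
      rw [this, ih]
      constructor
      · rintro ⟨p', hp', hL⟩
        rw [NFA.mem_stepSet] at hp'
        obtain ⟨p, hpS, hstep⟩ := hp'
        exact ⟨p, hpS, (K2 p a x).mpr ⟨p', hstep, hL⟩⟩
      · rintro ⟨p, hpS, hL⟩
        obtain ⟨p', hstep, hL'⟩ := (K2 p a x).mp hL
        exact ⟨p', by rw [NFA.mem_stepSet]; exact ⟨p, hpS, hstep⟩, hL'⟩
  refine ⟨Set St, inferInstance, M.toDFA, ?_⟩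
  rw [NFA.toDFA_correct]
  ext x
  rw [NFA.mem_accepts, K3]
  constructor
  · rintro ⟨p, ⟨hp1, hp2⟩, z, hz, hext⟩
    rw [hp2, List.nil_append] at hz
    subst hz
    rwa [hp1] at hext
  · intro hx
    exact ⟨(⟨st m k w₀, Set.mem_range_self _⟩, ⟨[], by simp⟩), ⟨rfl, rfl⟩,
      x, by simp, hx⟩


lemma isRegular_stPre (m k : ℕ) [Fintype V] (q₀ : Set (List V) × List V) :
    Language.IsRegular ({w : List V | st m k w = q₀} : Language V) := by
  classical
  haveI : Fintype ↥(Set.range (st (V := V) m k)) := (finite_range_st m k).fintype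
  let M : DFA V ↥(Set.range (st (V := V) m k)) :=
    { step := fun s a => ⟨transQ m k s.val [a], by
        obtain ⟨w, hw⟩ := s.property
        rw [← hw, ← st_append]
        exact Set.mem_range_self _⟩
      start := ⟨st m k [], Set.mem_range_self _⟩
      accept := {s | s.val = q₀} }
  refine ⟨_, inferInstance, M, ?_⟩
  have heval : ∀ w : List V, (M.eval w).val = st m k w := by
    intro w
    induction w using List.reverseRecOn with
    | nil => rfl
    | append_singleton w a ih =>
      rw [DFA.eval_append_singleton]
      show (transQ m k (M.eval w).val [a]) = _
      rw [ih, ← st_append]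
  ext w
  rw [DFA.mem_accepts]
  show (M.eval w).val = q₀ ↔ _
  rw [heval]
  rfl

lemma isRegular_empty : Language.IsRegular ((∅ : Set (List V)) : Language V) := by
  refine ⟨PUnit, inferInstance, ⟨fun s _ => s, PUnit.unit, ∅⟩, ?_⟩
  ext x
  rw [DFA.mem_accepts]
  constructor
  · exact fun h => h.elim
  · exact fun h => h.elim



variable {V : Type} [Fintype V]

theorem class_closed_rHIstar (bar : V → V) (hbar : ∀ a, bar (bar a) = a) (m k : ℕ) (hm : 1 ≤ m) (hk : 1 ≤ k)
    (𝓛 : Set (Set (List V)))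
    (hInter : ∀ L ∈ 𝓛, ∀ R : Set (List V), Language.IsRegular (lang R) → L ∩ R ∈ 𝓛)
    (hConcatR : ∀ L ∈ 𝓛, ∀ R : Set (List V), Language.IsRegular (lang R) →
      Set.image2 (· ++ ·) L R ∈ 𝓛)
    (hConcatL : ∀ L ∈ 𝓛, ∀ R : Set (List V), Language.IsRegular (lang R) →
      Set.image2 (· ++ ·) R L ∈ 𝓛)
    (hUnion : ∀ L₁ ∈ 𝓛, ∀ L₂ ∈ 𝓛, L₁ ∪ L₂ ∈ 𝓛) :
    ∀ L ∈ 𝓛, rHIstarL bar m k L ∈ 𝓛 := by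
  intro L hL
  have hempty : (∅ : Set (List V)) ∈ 𝓛 := by
    have := hInter L hL ∅ isRegular_empty
    rwa [Set.inter_empty] at this
  -- finite union lemma
  have hBU : ∀ (S : Set (Set (List V) × List V)), S.Finite →
      ∀ (f : (Set (List V) × List V) → Set (List V)),
        (∀ q ∈ S, f q ∈ 𝓛) → (⋃ q ∈ S, f q) ∈ 𝓛 := by
    intro S hS f hf
    refine Set.Finite.induction_on (motive := fun S _ => (∀ q ∈ S, f q ∈ 𝓛) → (⋃ q ∈ S, f q) ∈ 𝓛)
      S hS (fun _ => by simpa using hempty) ?_ hf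
    intro a s ha hs ih hf'
    rw [Set.biUnion_insert]
    exact hUnion _ (hf' a (Set.mem_insert _ _)) _
      (ih fun q hq => hf' q (Set.mem_insert_of_mem _ hq))
  -- main decomposition
  have hmain : rHIstarL bar m k L =
      ⋃ q ∈ Set.range (st (V := V) m k),
        Set.image2 (· ++ ·) (L ∩ {w | st m k w = q}) {x | ExtQ bar m k q x} := by
    ext v
    simp only [rHIstarL, Set.mem_iUnion, exists_prop]
    constructor
    · rintro ⟨w, hw, hv⟩
      rw [rHIstar_eq_reach] at hv
      obtain ⟨x, hx, rfl⟩ := hv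
      exact ⟨st m k w, Set.mem_range_self _,
        Set.mem_image2_of_mem ⟨hw, rfl⟩ (extQ_of_reach hbar hx)⟩
    · rintro ⟨q, ⟨w₀, rfl⟩, hv⟩
      obtain ⟨w, ⟨hwL, hwq⟩, x, hx, rfl⟩ := hv
      refine ⟨w, hwL, ?_⟩
      rw [rHIstar_eq_reach]
      rw [← hwq] at hx
      exact ⟨x, reach_of_extQ hbar hx w rfl, rfl⟩
  rw [hmain]
  refine hBU _ (finite_range_st m k) _ ?_
  rintro q ⟨w₀, rfl⟩
  exact hConcatR _ (hInter L hL _ (isRegular_stPre m k _)) _ (isRegular_extLang bar m k w₀)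

end Hairpin
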